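/- (Abel's formula) Let p, q : I → ℝ be continuous with p(t) > 0 for all t ∈ I, and fix b ∈ I. If x and y are solutions on I of the self-adjoint equation D^α[p·D^α x](t) + q(t)·x(t) = 0, then for all t ∈ I, W(x,y)(t) = c·e_0(t,b)²/p(t), where c = p(b)·W(x,y)(b). -/

import Mathlib

open Set

/-- The conformable proportional derivative `D^α f(t) = κ₁(t) f(t) + κ₀(t) f'(t)`. -/
noncomputable def Dconf (κ₀ κ₁ : ℝ → ℝ) (f : ℝ → ℝ) (t : ℝ) : ℝ :=
  κ₁ t * f t + κ₀ t * deriv f t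

/-- The conformable exponential `e_0(t,s) = exp(-∫_s^t κ₁/κ₀)`. -/
noncomputable def e0 (κ₀ κ₁ : ℝ → ℝ) (t s : ℝ) : ℝ :=
  Real.exp (-(∫ τ in s..t, κ₁ τ / κ₀ τ))

/-- The conformable Wronskian `W(x,y)(t) = x(t) D^α y(t) - y(t) D^α x(t)`. -/
noncomputable def Wr (κ₀ κ₁ : ℝ → ℝ) (x y : ℝ → ℝ) (t : ℝ) : ℝ :=
  x t * Dconf κ₀ κ₁ y t - y t * Dconf κ₀ κ₁ x t

/-- `x` is a solution of the homogeneous self-adjoint equation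
`D^α[p D^α x] + q x = 0` on `I`. -/
def IsSolutionSA (κ₀ κ₁ p q : ℝ → ℝ) (I : Set ℝ) (x : ℝ → ℝ) : Prop :=
  (∀ t ∈ I, DifferentiableAt ℝ x t) ∧
  ContinuousOn (Dconf κ₀ κ₁ x) I ∧
  (∀ t ∈ I, DifferentiableAt ℝ (fun s => p s * Dconf κ₀ κ₁ x s) t) ∧
  ContinuousOn (Dconf κ₀ κ₁ (fun s => p s * Dconf κ₀ κ₁ x s)) I ∧
  ∀ t ∈ I, Dconf κ₀ κ₁ (fun s => p s * Dconf κ₀ κ₁ x s) t + q t * x t = 0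

/-- Abel's formula: if `x, y` solve `D^α[p D^α x] + q x = 0` on the interval `I`,
then `W(x,y)(t) = c e₀(t,b)²/p(t)` with `c = p(b) W(x,y)(b)`. -/
theorem abels_formula
    (I : Set ℝ) (hIconn : I.OrdConnected)
    (κ₀ κ₁ : ℝ → ℝ)
    (hκ₀c : ContinuousOn κ₀ I) (hκ₁c : ContinuousOn κ₁ I)
    (hκ₀pos : ∀ t ∈ I, 0 < κ₀ t) (hκ₁nn : ∀ t ∈ I, 0 ≤ κ₁ t)
    (p q : ℝ → ℝ)
    (hpc : ContinuousOn p I) (hqc : ContinuousOn q I)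
    (hp : ∀ t ∈ I, 0 < p t)
    (b : ℝ) (hb : b ∈ I)
    (x y : ℝ → ℝ)
    (hx : IsSolutionSA κ₀ κ₁ p q I x)
    (hy : IsSolutionSA κ₀ κ₁ p q I y) :
    ∀ t ∈ I,
      Wr κ₀ κ₁ x y t = (p b * Wr κ₀ κ₁ x y b) * (e0 κ₀ κ₁ t b) ^ 2 / p t := by
  obtain ⟨hxd, hxc, hPXd, hPXc, hxeq⟩ := hx
  obtain ⟨hyd, hyc, hPYd, hPYc, hyeq⟩ := hy
  set r : ℝ → ℝ := fun s => κ₁ s / κ₀ s with hrdef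
  have hrc : ContinuousOn r I := hκ₁c.div hκ₀c (fun s hs => (hκ₀pos s hs).ne')
  set PX : ℝ → ℝ := fun s => p s * Dconf κ₀ κ₁ x s with hPXdef
  set PY : ℝ → ℝ := fun s => p s * Dconf κ₀ κ₁ y s with hPYdef
  set g : ℝ → ℝ := fun s => x s * PY s - y s * PX s with hgdef
  have hgp : ∀ s, g s = p s * Wr κ₀ κ₁ x y s := by
    intro s; simp only [hgdef, hPXdef, hPYdef, Wr]; ring
  -- the key derivative computation
  have hgd : ∀ s ∈ I, HasDerivAt g (-(2 * r s) * g s) s := by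
    intro s hs
    have h1 : HasDerivAt x (deriv x s) s := (hxd s hs).hasDerivAt
    have h2 : HasDerivAt y (deriv y s) s := (hyd s hs).hasDerivAt
    have h3 : HasDerivAt PX (deriv PX s) s := (hPXd s hs).hasDerivAt
    have h4 : HasDerivAt PY (deriv PY s) s := (hPYd s hs).hasDerivAt
    have hD := (h1.mul h4).sub (h2.mul h3)
    refine hD.congr_deriv ?_
    symm
    have E1 := hxeq s hs
    have E2 := hyeq s hs
    have ha : κ₀ s ≠ 0 := (hκ₀pos s hs).ne'
    have hPXs : PX s = p s * (κ₁ s * x s + κ₀ s * deriv x s) := rfl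
    have hPYs : PY s = p s * (κ₁ s * y s + κ₀ s * deriv y s) := rfl
    have hgs : g s = x s * PY s - y s * PX s := rfl
    simp only [Dconf] at E1 E2
    rw [hgs]
    simp only [hPXs, hPYs, hrdef] at E1 E2 ⊢
    field_simp
    linear_combination y s * E1 - x s * E2
  -- continuity of g on I
  have hxcont : ContinuousOn x I := fun s hs => (hxd s hs).continuousAt.continuousWithinAt
  have hycont : ContinuousOn y I := fun s hs => (hyd s hs).continuousAt.continuousWithinAt
  have hPXcont : ContinuousOn PX I := fun s hs => (hPXd s hs).continuousAt.continuousWithinAt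
  have hPYcont : ContinuousOn PY I := fun s hs => (hPYd s hs).continuousAt.continuousWithinAt
  have hgc : ContinuousOn g I := (hxcont.mul hPYcont).sub (hycont.mul hPXcont)
  intro t ht
  have hsub : uIcc b t ⊆ I := hIconn.uIcc_subset hb ht
  set a₁ := min b t with ha₁
  set a₂ := max b t with ha₂
  have huIcc : uIcc b t = Icc a₁ a₂ := rfl
  set A : ℝ → ℝ := fun u => ∫ s in b..u, r s with hAdef
  have hInt : ∀ u ∈ Icc a₁ a₂, IntervalIntegrable r MeasureTheory.volume b u := by
    intro u hu
    exact (hrc.mono (hIconn.uIcc_subset hb (hsub hu))).intervalIntegrable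
  have hAcont : ContinuousOn A (Icc a₁ a₂) := by
    rw [← huIcc]
    exact intervalIntegral.continuousOn_primitive_interval
      ((hrc.mono hsub).integrableOn_compact isCompact_uIcc)
  have hAd : ∀ s ∈ Ico a₁ a₂, HasDerivWithinAt A (r s) (Ici s) s := by
    intro s hs
    have hsI : s ∈ I := hsub ⟨hs.1, hs.2.le⟩
    have hmem : Icc s a₂ ∈ nhdsWithin s (Ioi s) := by
      apply mem_nhdsWithin.2 ⟨Iio a₂, isOpen_Iio, hs.2, ?_⟩
      rintro u ⟨hu1, hu2⟩
      exact ⟨le_of_lt hu2, hu1.le⟩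
    have hIccI : Icc s a₂ ⊆ I := fun u hu => hsub ⟨le_trans hs.1 hu.1, hu.2⟩
    have hmeas : StronglyMeasurableAtFilter r (nhdsWithin s (Ioi s)) MeasureTheory.volume :=
      ⟨Icc s a₂, hmem, ((hrc.mono hIccI).aestronglyMeasurable measurableSet_Icc)⟩
    have hcont : ContinuousWithinAt r (Ioi s) s := by
      have := (hrc.mono hIccI) s (left_mem_Icc.2 hs.2.le)
      exact this.mono_of_mem_nhdsWithin hmem
    exact intervalIntegral.integral_hasDerivWithinAt_right
      (hInt s ⟨hs.1, hs.2.le⟩) hmeas hcont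
  set φ : ℝ → ℝ := fun u => g u * Real.exp (2 * A u) with hφdef
  have hφd : ∀ s ∈ Ico a₁ a₂, HasDerivWithinAt φ 0 (Ici s) s := by
    intro s hs
    have hsI : s ∈ I := hsub ⟨hs.1, hs.2.le⟩
    have h5 : HasDerivWithinAt g (-(2 * r s) * g s) (Ici s) s :=
      (hgd s hsI).hasDerivWithinAt
    have h6 : HasDerivWithinAt (fun u => Real.exp (2 * A u))
        (Real.exp (2 * A s) * (2 * r s)) (Ici s) s :=
      ((hAd s hs).const_mul 2).exp
    have := h5.mul h6
    refine this.congr_deriv ?_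
    ring
  have hexpcont : ContinuousOn (fun u => Real.exp (2 * A u)) (Icc a₁ a₂) :=
    Real.continuous_exp.comp_continuousOn (continuousOn_const.mul hAcont)
  have hφcont : ContinuousOn φ (Icc a₁ a₂) := (hgc.mono (huIcc ▸ hsub)).mul hexpcont
  have hconst := constant_of_has_deriv_right_zero hφcont hφd
  have htmem : t ∈ Icc a₁ a₂ := ⟨min_le_right _ _, le_max_right _ _⟩
  have hbmem : b ∈ Icc a₁ a₂ := ⟨min_le_left _ _, le_max_left _ _⟩
  have key0 : φ t = φ b := (hconst t htmem).trans (hconst b hbmem).symm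
  have hAb : A b = 0 := intervalIntegral.integral_same
  have key : g t * Real.exp (2 * A t) = g b := by
    have := key0
    simp only [hφdef, hAb, mul_zero, Real.exp_zero, mul_one] at this
    exact this
  have hpt : p t ≠ 0 := (hp t ht).ne'
  have he : (e0 κ₀ κ₁ t b) ^ 2 = Real.exp (-(2 * A t)) := by
    rw [e0, sq, ← Real.exp_add]
    congr 1
    simp only [hAdef, hrdef]
    ring
  rw [he, eq_div_iff hpt, Real.exp_neg]
  have hex : Real.exp (2 * A t) ≠ 0 := Real.exp_ne_zero _
  rw [hgp t, hgp b] at key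
  field_simp
  linear_combination key
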